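/- Let K be a connected compact metric space, let θ : K → K be a continuous non-constant map, and let T : C(K) → C(K) be the composition operator T(f) = f ∘ θ. Then the distance from T to the compact operators and the distance from T to the weakly compact operators both equal 1: ‖T‖_e = ‖T‖_{e,w} = 1. -/
import Mathlib

open Filter Topology Metric Set

namespace CompOpAux

noncomputable def bmp (c w : ℝ) (y : ℝ) : ℝ := max 0 (1 - |y - c| / w)

lemma bmp_nonneg (c w y : ℝ) : 0 ≤ bmp c w y := le_max_left _ _

lemma bmp_le_one (c w y : ℝ) (hw : 0 < w) : bmp c w y ≤ 1 :=
  max_le zero_le_one (by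
    have h : 0 ≤ |y - c| / w := div_nonneg (abs_nonneg _) hw.le
    linarith)

lemma bmp_self (c w : ℝ) : bmp c w c = 1 := by
  simp [bmp]

lemma bmp_eq_zero {c w y : ℝ} (hw : 0 < w) (h : w ≤ |y - c|) : bmp c w y = 0 := by
  have h1 : (1:ℝ) ≤ |y - c| / w := (one_le_div hw).2 h
  have h2 : 1 - |y - c| / w ≤ 0 := by linarith
  simp [bmp, max_eq_left h2]

lemma bmp_continuous (c w : ℝ) : Continuous (bmp c w) := by
  unfold bmp; fun_prop

variable {K : Type*} [MetricSpace K] [CompactSpace K] [ConnectedSpace K]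

theorem norm_sub_ge (θ : C(K, K)) (hθ : ¬ ∃ c : K, ∀ t : K, θ t = c)
    (T : C(K, ℝ) →L[ℝ] C(K, ℝ)) (hT : ∀ f : C(K, ℝ), T f = f.comp θ)
    (S : C(K, ℝ) →L[ℝ] C(K, ℝ))
    (hcl : ∀ x : ℕ → C(K, ℝ), (∀ m, ‖x m‖ ≤ 1) →
      ∃ u : C(K, ℝ), ∀ t : K, MapClusterPt (u t) atTop fun m => S (x m) t) :
    1 ≤ ‖T - S‖ := by
  by_contra hcon
  push_neg at hcon
  push_neg at hθ
  obtain ⟨p⟩ : Nonempty K := inferInstance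
  obtain ⟨q, hq⟩ := hθ (θ p)
  set A := θ p with hA
  set r := dist (θ q) A with hrdef
  have hr : 0 < r := dist_pos.2 hq
  set cc : ℕ → ℝ := fun k => r / ((k : ℝ) + 2) with hcc
  set ww : ℕ → ℝ := fun k => r / (3 * ((k : ℝ) + 2) * ((k : ℝ) + 3)) with hww
  have hccpos : ∀ k, 0 < cc k := fun k => div_pos hr (by positivity)
  have hccler : ∀ k, cc k ≤ r := fun k => by
    have h1 : (1:ℝ) ≤ (k:ℝ) + 2 := by
      have := (Nat.cast_nonneg k : (0:ℝ) ≤ (k:ℝ)); linarith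
    exact div_le_self hr.le h1
  have hwwpos : ∀ k, 0 < ww k := fun k => div_pos hr (by positivity)
  have hanti_cc : ∀ {a b : ℕ}, a ≤ b → cc b ≤ cc a := by
    intro a b hab
    have hc : ((a:ℝ) + 2) ≤ ((b:ℝ) + 2) := by
      have : (a:ℝ) ≤ (b:ℝ) := Nat.cast_le.2 hab
      linarith
    exact div_le_div_of_nonneg_left hr.le (by positivity) hc
  have hanti_ww : ∀ {a b : ℕ}, a ≤ b → ww b ≤ ww a := by
    intro a b hab
    have hab' : (a:ℝ) ≤ (b:ℝ) := Nat.cast_le.2 hab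
    have hc : 3 * ((a:ℝ) + 2) * ((a:ℝ) + 3) ≤ 3 * ((b:ℝ) + 2) * ((b:ℝ) + 3) := by
      have ha0 := (Nat.cast_nonneg a : (0:ℝ) ≤ (a:ℝ))
      nlinarith
    exact div_le_div_of_nonneg_left hr.le (by positivity) hc
  have key3 : ∀ j : ℕ, 3 * ww j = cc j - cc (j + 1) := by
    intro j
    have h2 : ((j:ℝ) + 2) ≠ 0 := by positivity
    have h3 : ((j:ℝ) + 3) ≠ 0 := by positivity
    simp only [hcc, hww]
    push_cast
    field_simp
    ring
  have hsep : ∀ j k : ℕ, j < k → ww j + ww k ≤ cc j - cc k := by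
    intro j k hjk
    have h1 : ww k ≤ ww j := hanti_ww hjk.le
    have h2 : cc k ≤ cc (j + 1) := hanti_cc hjk
    have h3 := key3 j
    have h4 := hwwpos j
    linarith
  have hsep' : ∀ j k : ℕ, j ≠ k → ww j + ww k ≤ |cc j - cc k| := by
    intro j k hjk
    rcases hjk.lt_or_gt with h | h
    · exact (hsep j k h).trans (le_abs_self _)
    · have := hsep k j h
      rw [abs_sub_comm]
      linarith [le_abs_self (cc k - cc j)]
  have hcenter : ∀ j k : ℕ, j ≠ k → bmp (cc k) (ww k) (cc j) = 0 := by
    intro j k hjk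
    apply bmp_eq_zero (hwwpos k)
    have h1 := hsep' j k hjk
    have h2 := hwwpos j
    linarith
  have hdisj : ∀ (j k : ℕ) (y : ℝ), j ≠ k → bmp (cc j) (ww j) y ≠ 0 →
      bmp (cc k) (ww k) y = 0 := by
    intro j k y hjk hne
    have h1 : |y - cc j| < ww j := by
      by_contra h
      push_neg at h
      exact hne (bmp_eq_zero (hwwpos j) h)
    apply bmp_eq_zero (hwwpos k)
    have h2 := hsep' j k hjk
    have htri : |cc j - cc k| ≤ |cc j - y| + |y - cc k| := abs_sub_le _ _ _
    rw [abs_sub_comm (cc j) y] at htri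
    linarith
  have hφcont : Continuous fun t : K => dist (θ t) A := (map_continuous θ).dist continuous_const
  have hival : Icc (0:ℝ) r ⊆ range fun t : K => dist (θ t) A := by
    have h := intermediate_value_univ p q hφcont
    have h0 : dist (θ p) A = 0 := by simp [hA]
    rw [h0] at h
    exact h
  have hs : ∀ k, ∃ t : K, dist (θ t) A = cc k := fun k =>
    hival ⟨(hccpos k).le, hccler k⟩
  choose s hsk using hs
  obtain ⟨sstar, ψ, hψ, hψtend⟩ := CompactSpace.tendsto_subseq s
  have fcont : ∀ k, Continuous fun t : K => bmp (cc k) (ww k) (dist t A) :=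
    fun k => (bmp_continuous _ _).comp (continuous_id.dist continuous_const)
  set f : ℕ → C(K, ℝ) := fun k => ⟨_, fcont k⟩ with hf
  set x : ℕ → C(K, ℝ) := fun m => ∑ k ∈ Finset.range (m + 1), ((-1 : ℝ) ^ k) • f (ψ k) with hx
  have hxeval : ∀ m (t : K), x m t
      = ∑ k ∈ Finset.range (m + 1), ((-1:ℝ) ^ k) * bmp (cc (ψ k)) (ww (ψ k)) (dist t A) := by
    intro m t
    simp [hx, hf, smul_eq_mul]
  have hxnorm : ∀ m, ‖x m‖ ≤ 1 := by
    intro m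
    rw [ContinuousMap.norm_le _ zero_le_one]
    intro t
    rw [Real.norm_eq_abs, hxeval m t]
    by_cases hall : ∀ k ∈ Finset.range (m + 1), bmp (cc (ψ k)) (ww (ψ k)) (dist t A) = 0
    · rw [Finset.sum_eq_zero fun k hk => by rw [hall k hk, mul_zero]]
      simp
    · push_neg at hall
      obtain ⟨k₀, hk₀mem, hk₀⟩ := hall
      rw [Finset.sum_eq_single_of_mem k₀ hk₀mem ?_]
      · rw [abs_mul, abs_pow, abs_neg, abs_one, one_pow, one_mul,
          abs_of_nonneg (bmp_nonneg _ _ _)]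
        exact bmp_le_one _ _ _ (hwwpos _)
      · intro b hb hbne
        rw [hdisj (ψ k₀) (ψ b) _ (fun h => hbne (hψ.injective h).symm) hk₀, mul_zero]
  have hTx : ∀ m j, j ≤ m → (T (x m)) (s (ψ j)) = (-1 : ℝ) ^ j := by
    intro m j hjm
    rw [hT]
    show x m (θ (s (ψ j))) = _
    rw [hxeval, hsk (ψ j)]
    rw [Finset.sum_eq_single_of_mem j (Finset.mem_range.2 (Nat.lt_succ_of_le hjm)) ?_]
    · rw [bmp_self, mul_one]
    · intro b hb hbne
      rw [hcenter (ψ j) (ψ b) (fun h => hbne (hψ.injective h).symm), mul_zero]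
  obtain ⟨u, hu⟩ := hcl x hxnorm
  have hRnorm : ∀ m (t : K), |((T - S) (x m)) t| ≤ ‖T - S‖ := by
    intro m t
    have h1 : ‖((T - S) (x m)) t‖ ≤ ‖(T - S) (x m)‖ := ContinuousMap.norm_coe_le_norm _ t
    have h2 : ‖(T - S) (x m)‖ ≤ ‖T - S‖ * ‖x m‖ := (T - S).le_opNorm _
    have h3 : ‖T - S‖ * ‖x m‖ ≤ ‖T - S‖ * 1 :=
      mul_le_mul_of_nonneg_left (hxnorm m) (norm_nonneg (T - S))
    rw [Real.norm_eq_abs] at h1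
    linarith
  have hubd : ∀ j, |u (s (ψ j)) - (-1:ℝ) ^ j| ≤ ‖T - S‖ := by
    intro j
    have hclu := (hu (s (ψ j))).clusterPt
    have hmem : Metric.closedBall ((-1:ℝ) ^ j) ‖T - S‖ ∈
        Filter.map (fun m => S (x m) (s (ψ j))) atTop := by
      rw [Filter.mem_map]
      filter_upwards [Filter.eventually_ge_atTop j] with m hm
      have hSx : S (x m) (s (ψ j)) = (-1:ℝ) ^ j - ((T - S) (x m)) (s (ψ j)) := by
        have h0 : (T - S) (x m) = T (x m) - S (x m) := by simp
        rw [h0, ContinuousMap.sub_apply, hTx m j hm]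
        ring
      have hgoal : S (x m) (s (ψ j)) ∈ Metric.closedBall ((-1:ℝ) ^ j) ‖T - S‖ := by
        rw [Metric.mem_closedBall, Real.dist_eq, hSx]
        have h4 := hRnorm m (s (ψ j))
        rw [show ((-1:ℝ) ^ j - ((T - S) (x m)) (s (ψ j)) - (-1:ℝ) ^ j)
            = -(((T - S) (x m)) (s (ψ j))) by ring, abs_neg]
        exact h4
      exact hgoal
    have hcp : ClusterPt (u (s (ψ j))) (𝓟 (Metric.closedBall ((-1:ℝ) ^ j) ‖T - S‖)) :=
      hclu.mono (le_principal_iff.2 hmem)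
    have hmemcl := mem_closure_iff_clusterPt.2 hcp
    rw [IsClosed.closure_eq Metric.isClosed_closedBall] at hmemcl
    rwa [Metric.mem_closedBall, Real.dist_eq] at hmemcl
  have htendu : Tendsto (fun j => u (s (ψ j))) atTop (𝓝 (u sstar)) :=
    (u.continuous.tendsto sstar).comp hψtend
  have h2mono : Tendsto (fun i : ℕ => 2 * i) atTop atTop :=
    StrictMono.tendsto_atTop fun a b h => by omega
  have h2mono' : Tendsto (fun i : ℕ => 2 * i + 1) atTop atTop :=
    StrictMono.tendsto_atTop fun a b h => by omega
  have heven : 1 - ‖T - S‖ ≤ u sstar := by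
    refine ge_of_tendsto (htendu.comp h2mono) ?_
    refine Filter.Eventually.of_forall fun i => ?_
    have h := hubd (2 * i)
    rw [pow_mul] at h
    norm_num at h
    have h' := abs_le.1 h
    have : 1 - ‖T - S‖ ≤ u (s (ψ (2 * i))) := by linarith [h'.1]
    exact this
  have hodd : u sstar ≤ -1 + ‖T - S‖ := by
    refine le_of_tendsto (htendu.comp h2mono') ?_
    refine Filter.Eventually.of_forall fun i => ?_
    have h := hubd (2 * i + 1)
    rw [pow_succ, pow_mul] at h
    norm_num at h
    have h' := abs_le.1 h
    have : u (s (ψ (2 * i + 1))) ≤ -1 + ‖T - S‖ := by linarith [h'.2]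
    exact this
  linarith


theorem norm_T_eq (θ : C(K, K)) (T : C(K, ℝ) →L[ℝ] C(K, ℝ))
    (hT : ∀ f : C(K, ℝ), T f = f.comp θ) : ‖T‖ = 1 := by
  have hne : Nonempty K := inferInstance
  apply le_antisymm
  · apply T.opNorm_le_bound zero_le_one
    intro f
    rw [hT, one_mul, ContinuousMap.norm_le _ (norm_nonneg f)]
    intro t
    exact f.norm_coe_le_norm (θ t)
  · have h1 : T 1 = 1 := by rw [hT]; exact ContinuousMap.one_comp θ
    have h2 := T.le_opNorm 1
    rwa [h1, norm_one, mul_one] at h2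

end CompOpAux

/-- A bounded linear operator between normed spaces is weakly compact if the closure,
in the weak topology of the codomain, of the image of the closed unit ball is compact. -/
def IsWeaklyCompactOperator {X Y : Type*} [NormedAddCommGroup X] [NormedSpace ℝ X]
    [NormedAddCommGroup Y] [NormedSpace ℝ Y] (S : X →L[ℝ] Y) : Prop :=
  IsCompact (closure ((toWeakSpace ℝ Y) '' (⇑S '' Metric.closedBall 0 1)))

/-- Let `K` be a connected compact metric space, `θ : K → K` a
continuous non-constant map and `T : C(K) → C(K)` the composition operator
`T f = f ∘ θ`. Then the distance from `T` to the compact operators and the distance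
from `T` to the weakly compact operators both equal `1`. -/
theorem compositionOperator_essentialNorms_eq_one
    {K : Type*} [MetricSpace K] [CompactSpace K] [ConnectedSpace K]
    (θ : C(K, K)) (hθ : ¬ ∃ c : K, ∀ t : K, θ t = c)
    (T : C(K, ℝ) →L[ℝ] C(K, ℝ)) (hT : ∀ f : C(K, ℝ), T f = f.comp θ) :
    sInf {c : ℝ | ∃ S : C(K, ℝ) →L[ℝ] C(K, ℝ), IsCompactOperator ⇑S ∧ c = ‖T - S‖} = 1 ∧
    sInf {c : ℝ | ∃ S : C(K, ℝ) →L[ℝ] C(K, ℝ), IsWeaklyCompactOperator S ∧ c = ‖T - S‖} = 1 := by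
  have hT1 : ‖T‖ = 1 := CompOpAux.norm_T_eq θ T hT
  constructor
  · apply IsLeast.csInf_eq
    constructor
    · refine ⟨0, ?_, by rw [sub_zero, hT1]⟩
      have hz : (⇑(0 : C(K, ℝ) →L[ℝ] C(K, ℝ))) = (0 : C(K, ℝ) → C(K, ℝ)) := rfl
      rw [hz]
      exact isCompactOperator_zero
    · rintro b ⟨S, hS, rfl⟩
      apply CompOpAux.norm_sub_ge θ hθ T hT S
      intro x hx
      have hK : IsCompact (closure (⇑S '' Metric.closedBall 0 1)) :=
        hS.isCompact_closure_image_closedBall 1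
      have hle : Filter.map (fun m => S (x m)) atTop ≤
          𝓟 (closure (⇑S '' Metric.closedBall 0 1)) := by
        refine le_principal_iff.2 (Filter.mem_map.2 ?_)
        refine Filter.Eventually.of_forall fun m => subset_closure ⟨x m, ?_, rfl⟩
        simpa [Metric.mem_closedBall, dist_zero_right] using hx m
      obtain ⟨u, -, hu⟩ := hK.exists_mapClusterPt hle
      refine ⟨u, fun t => ?_⟩
      have hcont : ContinuousAt (fun g : C(K, ℝ) => g t) u :=
        (ContinuousEvalConst.continuous_eval_const t).continuousAt
      exact hu.continuousAt_comp hcont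
  · apply IsLeast.csInf_eq
    constructor
    · refine ⟨0, ?_, by rw [sub_zero, hT1]⟩
      unfold IsWeaklyCompactOperator
      have h1 : (⇑(0 : C(K, ℝ) →L[ℝ] C(K, ℝ)) '' Metric.closedBall 0 1) = {0} := by
        ext g
        simp only [Set.mem_image, ContinuousLinearMap.zero_apply, Set.mem_singleton_iff]
        constructor
        · rintro ⟨y, -, rfl⟩; rfl
        · rintro rfl; exact ⟨0, Metric.mem_closedBall_self zero_le_one, rfl⟩
      rw [h1, ← Convex.toWeakSpace_closure ℝ (convex_singleton 0), closure_singleton,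
        Set.image_singleton]
      exact isCompact_singleton
    · rintro b ⟨S, hS, rfl⟩
      apply CompOpAux.norm_sub_ge θ hθ T hT S
      intro x hx
      have hle : Filter.map (fun m => toWeakSpace ℝ C(K, ℝ) (S (x m))) atTop ≤
          𝓟 (closure ((toWeakSpace ℝ C(K, ℝ)) '' (⇑S '' Metric.closedBall 0 1))) := by
        refine le_principal_iff.2 (Filter.mem_map.2 ?_)
        refine Filter.Eventually.of_forall fun m => subset_closure ⟨S (x m), ⟨x m, ?_, rfl⟩, rfl⟩
        simpa [Metric.mem_closedBall, dist_zero_right] using hx m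
      obtain ⟨w, -, hw⟩ := hS.exists_mapClusterPt hle
      refine ⟨(toWeakSpace ℝ C(K, ℝ)).symm w, fun t => ?_⟩
      have hEcont : Continuous fun v : WeakSpace ℝ C(K, ℝ) =>
          ((toWeakSpace ℝ C(K, ℝ)).symm v) t :=
        WeakBilin.eval_continuous ((topDualPairing ℝ C(K, ℝ)).flip) (ContinuousMap.evalCLM ℝ t)
      have h2 := hw.continuousAt_comp hEcont.continuousAt
      simp only [Function.comp_def, LinearEquiv.symm_apply_apply] at h2
      exact h2
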